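/- Let μ be a probability measure on {0,1}^∞ and for u ∈ {0,1}* set μ_u := μ{v ∈ {0,1}^∞ : u is a prefix of v}. Then the function h(s) := (#s)! · ∏_{u∈s} μ_u on finite rooted binary trees is harmonic for the BST chain: ∑_t P(s,t) h(t) = h(s), where the sum is over the #s+1 trees t obtained from s by adjoining one external vertex and P(s,t) = 1/(#s+1). -/

import Mathlib

open Finset MeasureTheory

/-- A finite rooted binary tree: a nonempty, prefix-closed finite set of words over
`{0,1}` (encoded as `List Bool`), containing the root `[]`. -/
def IsBinTree (t : Finset (List Bool)) : Prop :=
  ([] : List Bool) ∈ t ∧ ∀ v ∈ t, ∀ u : List Bool, u <+: v → u ∈ t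

/-- The external vertices of a finite rooted binary tree `s`: words not in `s` whose
parent belongs to `s`. -/
def extVerts (s : Finset (List Bool)) : Finset (List Bool) :=
  (s.image (fun u => u ++ [true]) ∪ s.image (fun u => u ++ [false])) \ s

/-- The cylinder set of infinite `{0,1}`-words (elements of `{0,1}^∞ = ℕ → Bool`)
having the finite word `u` as a prefix. -/
def cylinder (u : List Bool) : Set (ℕ → Bool) :=
  {v | ∀ i : Fin u.length, v i = u.get i}

lemma measurableSet_cylinder (u : List Bool) : MeasurableSet (_root_.cylinder u) := by
  have : _root_.cylinder u = ⋂ i : Fin u.length, (fun v : ℕ → Bool => v i) ⁻¹' {u.get i} := by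
    ext v; simp [_root_.cylinder, List.get_eq_getElem]
  rw [this]
  exact MeasurableSet.iInter fun i => (measurable_pi_apply _) (measurableSet_singleton _)

lemma cylinder_append (u : List Bool) (b : Bool) :
    _root_.cylinder (u ++ [b]) = _root_.cylinder u ∩ {v | v u.length = b} := by
  ext v
  simp only [_root_.cylinder, List.get_eq_getElem, Set.mem_setOf_eq, Set.mem_inter_iff, Set.mem_setOf_eq]
  constructor
  · intro h
    refine ⟨fun i => ?_, ?_⟩
    · have := h ⟨i, by simp⟩
      simpa [List.getElem_append_left i.2] using this
    · have := h ⟨u.length, by simp⟩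
      simpa using this
  · rintro ⟨h1, h2⟩ ⟨i, hi⟩
    simp only [List.length_append, List.length_cons, List.length_nil] at hi
    rcases Nat.lt_or_ge i u.length with hlt | hge
    · simpa [List.getElem_append_left hlt] using h1 ⟨i, hlt⟩
    · have : i = u.length := by omega
      subst this
      simpa using h2

lemma measure_cylinder_split (μ : Measure (ℕ → Bool)) (u : List Bool) :
    μ (_root_.cylinder u) = μ (_root_.cylinder (u ++ [true])) + μ (_root_.cylinder (u ++ [false])) := by
  have hu : _root_.cylinder u = _root_.cylinder (u ++ [true]) ∪ _root_.cylinder (u ++ [false]) := by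
    rw [cylinder_append, cylinder_append]
    ext v
    by_cases hb : v u.length = true <;> simp [hb]
  have hd : Disjoint (_root_.cylinder (u ++ [true])) (_root_.cylinder (u ++ [false])) := by
    rw [cylinder_append, cylinder_append]
    apply Set.disjoint_left.2
    rintro x ⟨-, h1⟩ ⟨-, h2⟩
    rw [Set.mem_setOf_eq] at h1 h2
    rw [h1] at h2
    simp at h2
  rw [hu, measure_union hd (measurableSet_cylinder _)]

lemma mem_extVerts {s : Finset (List Bool)} {u : List Bool} :
    u ∈ extVerts s ↔ u ∉ s ∧ ∃ p ∈ s, ∃ b, u = p ++ [b] := by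
  simp only [extVerts, mem_sdiff, mem_union, mem_image]
  constructor
  · rintro ⟨(⟨p, hp, rfl⟩ | ⟨p, hp, rfl⟩), hu⟩
    exacts [⟨hu, p, hp, true, rfl⟩, ⟨hu, p, hp, false, rfl⟩]
  · rintro ⟨hu, p, hp, b, rfl⟩
    cases b
    exacts [⟨Or.inr ⟨p, hp, rfl⟩, hu⟩, ⟨Or.inl ⟨p, hp, rfl⟩, hu⟩]

lemma sum_extVerts (μ : Measure (ℕ → Bool)) [IsProbabilityMeasure μ] :
    ∀ s : Finset (List Bool), IsBinTree s →
      ∑ u ∈ extVerts s, μ (_root_.cylinder u) = 1 := by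
  intro s
  induction s using Finset.strongInduction with
  | _ s ih =>
    intro hs
    by_cases h1 : s = {[]}
    · subst h1
      have he : extVerts {([] : List Bool)} = {[true], [false]} := by decide
      rw [he, Finset.sum_pair (by simp)]
      have := measure_cylinder_split μ []
      simp only [List.nil_append] at this
      rw [← this]
      have : _root_.cylinder [] = Set.univ := by
        ext v; simp [_root_.cylinder]
      rw [this, measure_univ]
    · -- pick a maximal-length element v
      obtain ⟨v, hv, hmax⟩ := s.exists_max_image (fun w => w.length) ⟨[], hs.1⟩
      have hvne : v ≠ [] := by
        rintro rfl
        apply h1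
        apply Finset.eq_singleton_iff_unique_mem.2 ⟨hs.1, fun w hw => ?_⟩
        have := hmax w hw
        simpa using List.eq_nil_of_length_eq_zero (Nat.le_zero.1 this)
      set s' := s.erase v with hs'def
      have hsub : s' ⊆ s := Finset.erase_subset _ _
      have hss : s' ⊂ s := Finset.erase_ssubset hv
      have hs' : IsBinTree s' := by
        refine ⟨Finset.mem_erase.2 ⟨(Ne.symm hvne), hs.1⟩, ?_⟩
        intro w hw u hu
        have hw' : w ∈ s := hsub hw
        have hus : u ∈ s := hs.2 w hw' u hu
        refine Finset.mem_erase.2 ⟨?_, hus⟩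
        rintro rfl
        have : w.length ≤ u.length := hmax w hw'
        have := hu.eq_of_length_le this
        exact (Finset.mem_erase.1 hw).1 this.symm
      -- v is a leaf: its children are not in s
      have hchild : ∀ b : Bool, v ++ [b] ∉ s := by
        intro b hb
        have := hmax _ hb
        simp at this
      -- parent of v
      obtain ⟨p, b, rfl⟩ : ∃ p b, v = p ++ [b] := by
        rcases List.eq_nil_or_concat v with h | ⟨p, b, rfl⟩
        · exact absurd h hvne
        · exact ⟨p, b, List.concat_eq_append⟩
      have hp : p ∈ s := hs.2 _ hv p ⟨[b], rfl⟩
      have hpne : p ≠ p ++ [b] := by simp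
      have hps' : p ∈ s' := Finset.mem_erase.2 ⟨hpne, hp⟩
      have hvext : p ++ [b] ∈ extVerts s' :=
        mem_extVerts.2 ⟨Finset.notMem_erase _ _, p, hps', b, rfl⟩
      -- children are not in extVerts s'
      have hchildext : ∀ c : Bool, (p ++ [b]) ++ [c] ∉ extVerts s' := by
        intro c hc
        obtain ⟨_, q, hq, d, hqd⟩ := mem_extVerts.1 hc
        have : q = p ++ [b] := (List.append_inj' hqd.symm rfl).1
        rw [this] at hq
        exact Finset.notMem_erase _ _ hq
      -- the new external set
      have hext : extVerts s =
          insert ((p ++ [b]) ++ [true]) (insert ((p ++ [b]) ++ [false])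
            ((extVerts s').erase (p ++ [b]))) := by
        ext u
        simp only [Finset.mem_insert, Finset.mem_erase, mem_extVerts]
        constructor
        · rintro ⟨hu, q, hq, c, rfl⟩
          by_cases hqv : q = p ++ [b]
          · subst hqv
            cases c
            · exact Or.inr (Or.inl rfl)
            · exact Or.inl rfl
          · refine Or.inr (Or.inr ⟨?_, ?_, q, Finset.mem_erase.2 ⟨hqv, hq⟩, c, rfl⟩)
            · intro h
              rw [h] at hu
              exact hu hv
            · intro h
              exact hu (hsub h)
        · rintro (rfl | rfl | ⟨hne, hu, q, hq, c, rfl⟩)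
          · exact ⟨hchild true, p ++ [b], hv, true, rfl⟩
          · exact ⟨hchild false, p ++ [b], hv, false, rfl⟩
          · refine ⟨?_, q, hsub hq, c, rfl⟩
            intro h
            exact hu (Finset.mem_erase.2 ⟨hne, h⟩)
      rw [hext]
      have hne1 : (p ++ [b]) ++ [true] ∉ insert ((p ++ [b]) ++ [false])
          ((extVerts s').erase (p ++ [b])) := by
        simp only [Finset.mem_insert, Finset.mem_erase, not_or]
        exact ⟨by simp, fun h => hchildext true h.2⟩
      have hne2 : (p ++ [b]) ++ [false] ∉ (extVerts s').erase (p ++ [b]) := by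
        intro h
        exact hchildext false (Finset.mem_erase.1 h).2
      rw [Finset.sum_insert hne1, Finset.sum_insert hne2, ← add_assoc,
        ← measure_cylinder_split μ (p ++ [b])]
      rw [Finset.add_sum_erase _ (fun u => μ (_root_.cylinder u)) hvext]
      exact ih s' hss hs'


/-- **Harmonicity for the BST chain.**  Let `μ` be a probability measure on
`{0,1}^∞` and `μ_u := μ(cylinder u)`.  Then `h(s) := (#s)! · ∏_{u ∈ s} μ_u` is
harmonic for the BST chain: `∑_t P(s,t) h(t) = h(s)`, where the sum runs over the
`#s + 1` trees `t = insert u s` obtained by adjoining an external vertex `u` of `s`,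
each with `P(s,t) = 1/(#s+1)`. -/
theorem bst_harmonic_function
    (μ : Measure (ℕ → Bool)) [IsProbabilityMeasure μ]
    (h : Finset (List Bool) → ℝ)
    (hdef : ∀ s : Finset (List Bool),
      h s = (s.card.factorial : ℝ) * ∏ u ∈ s, (μ (cylinder u)).toReal)
    (s : Finset (List Bool)) (hs : IsBinTree s) :
    ∑ u ∈ extVerts s, (1 / (s.card + 1 : ℝ)) * h (insert u s) = h s := by
  have key := sum_extVerts μ s hs
  have hfin : ∀ u ∈ extVerts s, μ (_root_.cylinder u) ≠ ⊤ := fun u _ => measure_ne_top μ _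
  have hsum : ∑ u ∈ extVerts s, (μ (_root_.cylinder u)).toReal = 1 := by
    rw [← ENNReal.toReal_sum hfin, key, ENNReal.toReal_one]
  have hstep : ∀ u ∈ extVerts s, (1 / (s.card + 1 : ℝ)) * h (insert u s)
      = ((s.card.factorial : ℝ) * ∏ w ∈ s, (μ (_root_.cylinder w)).toReal)
        * (μ (_root_.cylinder u)).toReal := by
    intro u hu
    have hus : u ∉ s := (mem_extVerts.1 hu).1
    rw [hdef, Finset.card_insert_of_notMem hus, Finset.prod_insert hus, Nat.factorial_succ]
    have hpos : ((s.card : ℝ) + 1) ≠ 0 := by positivity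
    push_cast
    field_simp
  rw [Finset.sum_congr rfl hstep, ← Finset.mul_sum, hsum, mul_one, hdef]
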